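/- Let Q, ν, u₁ : U → E be smooth maps on an open set U ⊆ ℝ × ℝ such that ‖ν k‖ = 1 and ⟪ν k, Dᵢ Q k⟫ = 0 for all k ∈ U and i = 1, 2 (Q k is the incidence point of the ray with parameter k on a mirror, and ν is a unit normal field of the mirror along Q). Define the reflected directions u₂ : U → E by u₂ k = u₁ k − 2 ⟪u₁ k, ν k⟫ • ν k. Then for every k ∈ U, ⟪D₁ Q k, D₂ u₂ k⟫ − ⟪D₂ Q k, D₁ u₂ k⟫ = ⟪D₁ Q k, D₂ u₁ k⟫ − ⟪D₂ Q k, D₁ u₁ k⟫. (Reflection on a smooth mirror preserves the symplectic form dP ∧ du on the space of oriented lines.) -/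

import Mathlib

open RealInnerProductSpace

noncomputable section

/-- The Euclidean affine space in which light propagates. -/
abbrev E : Type := EuclideanSpace ℝ (Fin 3)

/-- Partial derivative in the first coordinate direction of `ℝ × ℝ`. -/
def D1 {F : Type*} [NormedAddCommGroup F] [NormedSpace ℝ F] (f : ℝ × ℝ → F) (k : ℝ × ℝ) : F :=
  fderiv ℝ f k (1, 0)

/-- Partial derivative in the second coordinate direction of `ℝ × ℝ`. -/
def D2 {F : Type*} [NormedAddCommGroup F] [NormedSpace ℝ F] (f : ℝ × ℝ → F) (k : ℝ × ℝ) : F :=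
  fderiv ℝ f k (0, 1)

private lemma fderiv_apply_comm {f : ℝ × ℝ → E} {k : ℝ × ℝ}
    (h : DifferentiableAt ℝ (fderiv ℝ f) k) (v w : ℝ × ℝ) :
    fderiv ℝ (fun x => fderiv ℝ f x v) k w = fderiv ℝ (fderiv ℝ f) k w v := by
  have h2 : HasFDerivAt (fun x => fderiv ℝ f x v)
      ((ContinuousLinearMap.apply ℝ E v).comp (fderiv ℝ (fderiv ℝ f) k)) k :=
    (ContinuousLinearMap.apply ℝ E v).hasFDerivAt.comp k h.hasFDerivAt
  rw [h2.fderiv]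
  rfl

private lemma diffAt_fderiv_apply {f : ℝ × ℝ → E} {k : ℝ × ℝ}
    (h : DifferentiableAt ℝ (fderiv ℝ f) k) (v : ℝ × ℝ) :
    DifferentiableAt ℝ (fun x => fderiv ℝ f x v) k :=
  ((ContinuousLinearMap.apply ℝ E v).hasFDerivAt.comp k h.hasFDerivAt).differentiableAt

theorem reflection_is_symplectic
    (U : Set (ℝ × ℝ)) (hU : IsOpen U)
    (Q nu u₁ : ℝ × ℝ → E)
    (hQ : ContDiffOn ℝ (⊤ : ℕ∞) Q U) (hnu : ContDiffOn ℝ (⊤ : ℕ∞) nu U)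
    (hu₁ : ContDiffOn ℝ (⊤ : ℕ∞) u₁ U)
    (hnunit : ∀ k ∈ U, ‖nu k‖ = 1)
    (horth : ∀ k ∈ U, ⟪nu k, D1 Q k⟫ = 0 ∧ ⟪nu k, D2 Q k⟫ = 0)
    (u₂ : ℝ × ℝ → E)
    (hu₂ : ∀ k, u₂ k = u₁ k - (2 * ⟪u₁ k, nu k⟫) • nu k) :
    ∀ k ∈ U,
      ⟪D1 Q k, D2 u₂ k⟫ - ⟪D2 Q k, D1 u₂ k⟫ =
      ⟪D1 Q k, D2 u₁ k⟫ - ⟪D2 Q k, D1 u₁ k⟫ := by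
  intro k hk
  have hkU : U ∈ nhds k := hU.mem_nhds hk
  have hQ' : ContDiffAt ℝ (⊤ : ℕ∞) Q k := hQ.contDiffAt hkU
  have hnu' : ContDiffAt ℝ (⊤ : ℕ∞) nu k := hnu.contDiffAt hkU
  have hu₁' : ContDiffAt ℝ (⊤ : ℕ∞) u₁ k := hu₁.contDiffAt hkU
  have hQd : DifferentiableAt ℝ Q k := hQ'.differentiableAt (by simp)
  have hnud : DifferentiableAt ℝ nu k := hnu'.differentiableAt (by simp)
  have hu₁d : DifferentiableAt ℝ u₁ k := hu₁'.differentiableAt (by simp)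
  -- second derivative of Q
  have hQ2 : DifferentiableAt ℝ (fderiv ℝ Q) k :=
    (hQ'.fderiv_right (m := ((⊤:ℕ∞) : WithTop ℕ∞)) (by simp)).differentiableAt (by simp)
  have hsymm : fderiv ℝ (fderiv ℝ Q) k (1, 0) (0, 1)
      = fderiv ℝ (fderiv ℝ Q) k (0, 1) (1, 0) :=
    hQ'.isSymmSndFDerivAt (by rw [minSmoothness_of_isRCLikeNormedField]; exact_mod_cast ENat.natCast_le_of_coe_top_le_withTop le_rfl 2) (1, 0) (0, 1)
  -- nu ⊥ derivatives of Q in a neighborhood, differentiate it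
  have key : ∀ v w : ℝ × ℝ, (∀ x ∈ U, ⟪nu x, fderiv ℝ Q x v⟫ = 0) →
      ⟪fderiv ℝ nu k w, fderiv ℝ Q k v⟫ = - ⟪nu k, fderiv ℝ (fderiv ℝ Q) k w v⟫ := by
    intro v w h0
    have hzero : fderiv ℝ (fun x => ⟪nu x, fderiv ℝ Q x v⟫) k = 0 := by
      have : (fun x => ⟪nu x, fderiv ℝ Q x v⟫) =ᶠ[nhds k] fun _ => (0 : ℝ) := by
        filter_upwards [hkU] with x hx using h0 x hx
      rw [this.fderiv_eq, fderiv_fun_const]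
      rfl
    have hcalc := fderiv_inner_apply (𝕜 := ℝ) hnud (diffAt_fderiv_apply hQ2 v) w
    rw [hzero] at hcalc
    simp only [ContinuousLinearMap.zero_apply] at hcalc
    rw [fderiv_apply_comm hQ2 v w] at hcalc
    linarith [hcalc]
  have horth1 : ∀ x ∈ U, ⟪nu x, fderiv ℝ Q x (1, 0)⟫ = 0 := fun x hx => (horth x hx).1
  have horth2 : ∀ x ∈ U, ⟪nu x, fderiv ℝ Q x (0, 1)⟫ = 0 := fun x hx => (horth x hx).2
  -- the crucial symmetry: ⟪D₁Q, D₂ν⟫ = ⟪D₂Q, D₁ν⟫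
  have hsym2 : ⟪fderiv ℝ Q k (1, 0), fderiv ℝ nu k (0, 1)⟫
      = ⟪fderiv ℝ Q k (0, 1), fderiv ℝ nu k (1, 0)⟫ := by
    rw [real_inner_comm (fderiv ℝ nu k (0, 1)) (fderiv ℝ Q k (1, 0)),
      real_inner_comm (fderiv ℝ nu k (1, 0)) (fderiv ℝ Q k (0, 1)),
      key (1, 0) (0, 1) horth1, key (0, 1) (1, 0) horth2, hsymm]
  -- derivatives of u₂
  have hfd : DifferentiableAt ℝ (fun x => 2 * ⟪u₁ x, nu x⟫) k := by
    exact (hu₁d.inner ℝ hnud).const_mul 2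
  have hu₂eq : u₂ = fun x => u₁ x - (2 * ⟪u₁ x, nu x⟫) • nu x := funext hu₂
  have hder : ∀ w : ℝ × ℝ, fderiv ℝ u₂ k w =
      fderiv ℝ u₁ k w - ((fderiv ℝ (fun x => 2 * ⟪u₁ x, nu x⟫) k w) • nu k
        + (2 * ⟪u₁ k, nu k⟫) • fderiv ℝ nu k w) := by
    intro w
    rw [hu₂eq, fderiv_fun_sub hu₁d (hfd.fun_smul hnud), fderiv_fun_smul hfd hnud]
    simp [ContinuousLinearMap.smul_apply, ContinuousLinearMap.smulRight_apply]
    ring_nf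
    abel
  have hn1 : ⟪fderiv ℝ Q k (1, 0), nu k⟫ = 0 := by
    rw [real_inner_comm]; exact horth1 k hk
  have hn2 : ⟪fderiv ℝ Q k (0, 1), nu k⟫ = 0 := by
    rw [real_inner_comm]; exact horth2 k hk
  simp only [D1, D2]
  rw [hder (0, 1), hder (1, 0)]
  simp only [inner_sub_right, inner_add_right, real_inner_smul_right, hn1, hn2, hsym2]
  ring
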